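/- If Q₁ and Q₂ are complex square matrices of sizes d₁ and d₂ (with d₁, d₂ ≥ 1) such that (Q₁Q₁†) ⊗ (Q₂Q₂†) equals the identity matrix of size d₁d₂, then Q₁Q₁† and Q₂Q₂† are positive real scalar multiples of the identity, with the scalars multiplying to 1. -/

import Mathlib

open Matrix Kronecker

/-- If `(Q₁Q₁†) ⊗ (Q₂Q₂†) = I`, then `Q₁Q₁†` and `Q₂Q₂†` are positive real scalar
multiples of the identity, with the scalars multiplying to `1`. -/
theorem scalar_of_kronecker_eq_one {d₁ d₂ : ℕ} (hd₁ : 1 ≤ d₁) (hd₂ : 1 ≤ d₂)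
    (Q₁ : Matrix (Fin d₁) (Fin d₁) ℂ) (Q₂ : Matrix (Fin d₂) (Fin d₂) ℂ)
    (h : (Q₁ * Q₁ᴴ) ⊗ₖ (Q₂ * Q₂ᴴ) = 1) :
    ∃ a b : ℝ, 0 < a ∧ 0 < b ∧ a * b = 1 ∧
      Q₁ * Q₁ᴴ = (a : ℂ) • 1 ∧ Q₂ * Q₂ᴴ = (b : ℂ) • 1 := by
  set A := Q₁ * Q₁ᴴ with hA
  set B := Q₂ * Q₂ᴴ with hB
  have i0 : Fin d₁ := ⟨0, hd₁⟩
  have j0 : Fin d₂ := ⟨0, hd₂⟩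
  have key : ∀ i i' j j', A i i' * B j j' = if i = i' ∧ j = j' then 1 else 0 := by
    intro i i' j j'
    have := congrFun (congrFun h (i, j)) (i', j')
    simpa [Matrix.kroneckerMap_apply, Matrix.one_apply, Prod.ext_iff] using this
  have hAsum : ∀ i, A i i = ((∑ k, Complex.normSq (Q₁ i k) : ℝ) : ℂ) := by
    intro i
    simp [hA, Matrix.mul_apply, Matrix.conjTranspose_apply, Complex.mul_conj]
  have hBsum : ∀ j, B j j = ((∑ k, Complex.normSq (Q₂ j k) : ℝ) : ℂ) := by
    intro j
    simp [hB, Matrix.mul_apply, Matrix.conjTranspose_apply, Complex.mul_conj]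
  have hAreal : ∀ i, A i i = ((A i i).re : ℂ) := by intro i; rw [hAsum i]; simp
  have hBreal : ∀ j, B j j = ((B j j).re : ℂ) := by intro j; rw [hBsum j]; simp
  have hAnonneg : ∀ i, 0 ≤ (A i i).re := by
    intro i; rw [hAsum i]
    simpa using Finset.sum_nonneg fun k _ => Complex.normSq_nonneg (Q₁ i k)
  have hone : A i0 i0 * B j0 j0 = 1 := by simpa using key i0 i0 j0 j0
  have hA0 : A i0 i0 ≠ 0 := fun h0 => by simp [h0] at hone
  have hB0 : B j0 j0 ≠ 0 := fun h0 => by simp [h0] at hone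
  set a := (A i0 i0).re
  set b := (B j0 j0).re
  have hab : a * b = 1 := by
    have : ((a * b : ℝ) : ℂ) = 1 := by push_cast; rw [← hAreal, ← hBreal]; exact hone
    exact_mod_cast this
  have ha : 0 < a := by
    rcases lt_or_eq_of_le (hAnonneg i0) with h' | h'
    · exact h'
    · exact absurd ((hAreal i0).trans (by rw [← h']; simp)) hA0
  have hb : 0 < b := by nlinarith
  refine ⟨a, b, ha, hb, hab, ?_, ?_⟩
  · ext i i'
    by_cases hii : i = i'
    · subst hii
      have h1 : A i i * B j0 j0 = 1 := by simpa using key i i j0 j0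
      have h2 : A i i * B j0 j0 = A i0 i0 * B j0 j0 := by rw [h1, hone]
      have : A i i = A i0 i0 := mul_right_cancel₀ hB0 h2
      rw [this, hAreal i0]
      simp [Matrix.one_apply]
      rfl
    · have h1 : A i i' * B j0 j0 = 0 := by
        simpa [hii] using key i i' j0 j0
      have : A i i' = 0 := by
        rcases mul_eq_zero.mp h1 with h' | h'
        · exact h'
        · exact absurd h' hB0
      rw [this]
      simp [Matrix.one_apply, hii]
  · ext j j'
    by_cases hjj : j = j'
    · subst hjj
      have h1 : A i0 i0 * B j j = 1 := by simpa using key i0 i0 j j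
      have h2 : A i0 i0 * B j j = A i0 i0 * B j0 j0 := by rw [h1, hone]
      have : B j j = B j0 j0 := mul_left_cancel₀ hA0 h2
      rw [this, hBreal j0]
      simp [Matrix.one_apply]
      rfl
    · have h1 : A i0 i0 * B j j' = 0 := by
        simpa [hjj] using key i0 i0 j j'
      have : B j j' = 0 := by
        rcases mul_eq_zero.mp h1 with h' | h'
        · exact absurd h' hA0
        · exact h'
      rw [this]
      simp [Matrix.one_apply, hjj]
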